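/- Let S be a finite set and P an irreducible stochastic matrix on S, and let L_P be the set of probability measures on F_S consistent with P. Then |L_P| ≥ 2 if and only if P has at least two rows each of which contains some entry lying in the open interval (0,1). -/

import Mathlib

open Finset

/-- A probability measure on the functions `S → S`, consistent with `P`
(a "grand coupling" of `P`, i.e. a member of `L_P`). -/
def IsCoupling {S : Type*} [Fintype S] [DecidableEq S] (μ : (S → S) → ℝ)
    (P : Matrix S S ℝ) : Prop :=
  (∀ f, 0 ≤ μ f) ∧ (∑ f, μ f = 1) ∧
    ∀ i j, (∑ f : S → S, if f i = j then μ f else 0) = P i j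

section Aux

variable {S : Type*} [Fintype S] [DecidableEq S]

lemma coupling_zero (P : Matrix S S ℝ) (μ : (S → S) → ℝ) (hμ : IsCoupling μ P)
    (f : S → S) (i : S) (h : P i (f i) = 0) : μ f = 0 := by
  have h1 := hμ.2.2 i (f i)
  have h2 : μ f ≤ ∑ f' : S → S, if f' i = f i then μ f' else 0 := by
    have := Finset.single_le_sum (f := fun f' : S → S => if f' i = f i then μ f' else 0)
      (fun f' _ => by by_cases hf : f' i = f i <;> simp [hf, hμ.1 f']) (Finset.mem_univ f)
    simpa using this
  have h3 := hμ.1 f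
  rw [h1, h] at h2
  linarith

/-- If all rows except possibly `i₀` are deterministic (with value `g i`),
then any coupling is completely determined. -/
lemma coupling_eq_of_det (P : Matrix S S ℝ) (i₀ : S) (g : S → S)
    (hg : ∀ i, i ≠ i₀ → ∀ k, k ≠ g i → P i k = 0)
    (μ : (S → S) → ℝ) (hμ : IsCoupling μ P) (f : S → S) :
    μ f = if ∀ i, i ≠ i₀ → f i = g i then P i₀ (f i₀) else 0 := by
  by_cases hf : ∀ i, i ≠ i₀ → f i = g i
  · rw [if_pos hf]
    have h1 := hμ.2.2 i₀ (f i₀)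
    rw [← h1, Fintype.sum_eq_single f, if_pos rfl]
    intro f' hf'
    by_cases h' : f' i₀ = f i₀
    · rw [if_pos h']
      by_cases hall : ∀ i, i ≠ i₀ → f' i = g i
      · exfalso
        apply hf'
        funext i
        by_cases hi : i = i₀
        · subst hi; exact h'
        · rw [hall i hi, hf i hi]
      · push_neg at hall
        obtain ⟨i, hi, hne⟩ := hall
        exact coupling_zero P μ hμ f' i (hg i hi (f' i) hne)
    · rw [if_neg h']
  · rw [if_neg hf]
    push_neg at hf
    obtain ⟨i, hi, hne⟩ := hf
    exact coupling_zero P μ hμ f i (hg i hi (f i) hne)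

/-- The product (independent) coupling. -/
lemma prod_isCoupling (P : Matrix S S ℝ) (hnn : ∀ i j, 0 ≤ P i j)
    (hrow : ∀ i, ∑ j, P i j = 1) :
    IsCoupling (fun f : S → S => ∏ i, P i (f i)) P := by
  refine ⟨fun f => Finset.prod_nonneg fun i _ => hnn i (f i), ?_, ?_⟩
  · have h := Finset.prod_univ_sum (fun _ : S => (Finset.univ : Finset S))
      (fun i j => P i j)
    rw [Fintype.piFinset_univ] at h
    rw [← h]
    simp [hrow]
  · intro i j
    have key : ∀ f : S → S, (if f i = j then ∏ i', P i' (f i') else 0)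
        = ∏ i', (if i' = i then (if f i' = j then P i' (f i') else 0)
            else P i' (f i')) := by
      intro f
      by_cases h : f i = j
      · rw [if_pos h]
        refine Finset.prod_congr rfl fun i' _ => ?_
        by_cases h' : i' = i
        · subst h'; simp [h]
        · simp [h']
      · rw [if_neg h]
        refine (Finset.prod_eq_zero (Finset.mem_univ i) ?_).symm
        simp [h]
    calc (∑ f : S → S, if f i = j then ∏ i', P i' (f i') else 0)
        = ∑ f : S → S, ∏ i', (if i' = i then (if f i' = j then P i' (f i') else 0)
            else P i' (f i')) := Finset.sum_congr rfl fun f _ => key f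
      _ = ∏ i', ∑ k, (if i' = i then (if k = j then P i' k else 0) else P i' k) := by
          have h := Finset.prod_univ_sum (fun _ : S => (Finset.univ : Finset S))
            (fun i' k => if i' = i then (if k = j then P i' k else 0) else P i' k)
          rw [Fintype.piFinset_univ] at h
          rw [h]
      _ = P i j := by
          rw [Finset.prod_eq_single i]
          · simp
          · intro i' _ hi'
            simp [hi', hrow i']
          · intro h; exact absurd (Finset.mem_univ i) h

lemma row_pos (P : Matrix S S ℝ) (hnn : ∀ i j, 0 ≤ P i j)
    (hrow : ∀ i, ∑ j, P i j = 1) (i : S) : ∃ j, 0 < P i j := by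
  by_contra h
  push_neg at h
  have : ∑ j, P i j = 0 :=
    Finset.sum_eq_zero fun j _ => le_antisymm (h j) (hnn i j)
  rw [hrow i] at this
  norm_num at this

lemma exists_other (P : Matrix S S ℝ) (hnn : ∀ i j, 0 ≤ P i j)
    (hrow : ∀ i, ∑ j, P i j = 1) (i j : S) (hj : P i j < 1) :
    ∃ j', j' ≠ j ∧ 0 < P i j' := by
  by_contra h
  push_neg at h
  have : ∑ k, P i k = P i j := by
    apply Fintype.sum_eq_single
    intro k hk
    exact le_antisymm (h k hk) (hnn i k)
  rw [hrow i] at this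
  linarith

end Aux

/-- `|L_P| ≥ 2` iff `P` has at least two rows each of which contains
an entry in the open interval `(0,1)`. -/
theorem two_couplings_iff_two_rows {S : Type*} [Fintype S] [DecidableEq S] [Nonempty S]
    (P : Matrix S S ℝ)
    (hnn : ∀ i j, 0 ≤ P i j) (hrow : ∀ i, ∑ j, P i j = 1)
    (hirr : ∀ i j, ∃ n : ℕ, 0 < n ∧ 0 < (P ^ n) i j) :
    (∃ μ ν : (S → S) → ℝ, IsCoupling μ P ∧ IsCoupling ν P ∧ μ ≠ ν) ↔
      ∃ i₁ i₂ : S, i₁ ≠ i₂ ∧ (∃ j, P i₁ j ∈ Set.Ioo (0 : ℝ) 1) ∧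
        (∃ j, P i₂ j ∈ Set.Ioo (0 : ℝ) 1) := by
  constructor
  · -- if at most one non-deterministic row, the coupling is unique
    rintro ⟨μ, ν, hμ, hν, hne⟩
    by_contra h
    push_neg at h
    -- pick the (at most one) non-deterministic row, or an arbitrary point
    set i₀ : S := open Classical in if h' : ∃ i, ∃ j, P i j ∈ Set.Ioo (0 : ℝ) 1 then h'.choose
      else Classical.arbitrary S with hi₀
    have hdet : ∀ i, i ≠ i₀ → ¬∃ j, P i j ∈ Set.Ioo (0 : ℝ) 1 := by
      intro i hi hcon
      by_cases h' : ∃ i, ∃ j, P i j ∈ Set.Ioo (0 : ℝ) 1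
      · have hspec := h'.choose_spec
        have : i₀ = h'.choose := by rw [hi₀, dif_pos h']
        obtain ⟨j, hj⟩ := hcon
        exact h h'.choose i (this ▸ hi.symm) hspec j hj
      · exact h' ⟨i, hcon⟩
    -- every row other than i₀ is deterministic
    have hdet' : ∀ i, i ≠ i₀ → ∃ j, ∀ k, k ≠ j → P i k = 0 := by
      intro i hi
      have hno := hdet i hi
      push_neg at hno
      -- each entry is 0 or ≥ 1
      have hentry : ∀ j, P i j = 0 ∨ 1 ≤ P i j := by
        intro j
        have := hno j
        rcases lt_or_eq_of_le (hnn i j) with hpos | heq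
        · right
          by_contra hlt
          push_neg at hlt
          exact this ⟨hpos, hlt⟩
        · left; exact heq.symm
      have hex : ∃ j, P i j ≠ 0 := by
        obtain ⟨j, hj⟩ := row_pos P hnn hrow i
        exact ⟨j, ne_of_gt hj⟩
      obtain ⟨j, hj⟩ := hex
      refine ⟨j, fun k hk => ?_⟩
      have h1 : 1 ≤ P i j := (hentry j).resolve_left hj
      by_contra hk0
      have h2 : 1 ≤ P i k := (hentry k).resolve_left hk0
      -- sum ≥ 2 > 1, contradiction
      have hsum : P i j + P i k ≤ ∑ l, P i l := by
        have : ({j, k} : Finset S) ⊆ Finset.univ := Finset.subset_univ _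
        calc P i j + P i k = ∑ l ∈ ({j, k} : Finset S), P i l := by
              rw [Finset.sum_insert (by simpa using hk.symm), Finset.sum_singleton]
          _ ≤ ∑ l, P i l := Finset.sum_le_sum_of_subset_of_nonneg this
              (fun l _ _ => hnn i l)
      rw [hrow i] at hsum
      linarith
    choose g hg using hdet'
    -- extend g to all of S
    set G : S → S := fun i => if hi : i ≠ i₀ then g i hi else Classical.arbitrary S
      with hG
    have hG' : ∀ i, i ≠ i₀ → ∀ k, k ≠ G i → P i k = 0 := by
      intro i hi k hk
      have : G i = g i hi := by rw [hG]; simp [hi]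
      exact hg i hi k (this ▸ hk)
    apply hne
    funext f
    rw [coupling_eq_of_det P i₀ G hG' μ hμ f, coupling_eq_of_det P i₀ G hG' ν hν f]
  · -- construction of two couplings
    rintro ⟨i₁, i₂, hne12, ⟨j₁, hj₁⟩, ⟨j₂, hj₂⟩⟩
    obtain ⟨j₁', hj₁'ne, hj₁'pos⟩ := exists_other P hnn hrow i₁ j₁ hj₁.2
    obtain ⟨j₂', hj₂'ne, hj₂'pos⟩ := exists_other P hnn hrow i₂ j₂ hj₂.2
    set μ : (S → S) → ℝ := fun f => ∏ i, P i (f i) with hμdef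
    have hμ : IsCoupling μ P := prod_isCoupling P hnn hrow
    -- the base function f₀
    set f₀ : S → S := fun i => if i = i₁ then j₁ else if i = i₂ then j₂
      else Classical.choose (row_pos P hnn hrow i) with hf₀
    have hf₀pos : ∀ i, 0 < P i (f₀ i) := by
      intro i
      rw [hf₀]
      by_cases h1 : i = i₁
      · subst h1; simpa using hj₁.1
      · by_cases h2 : i = i₂
        · subst h2; simp [h1]; exact hj₂.1
        · simp only [h1, h2, if_false]
          exact Classical.choose_spec (row_pos P hnn hrow i)
    have hf₀1 : f₀ i₁ = j₁ := by rw [hf₀]; simp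
    have hf₀2 : f₀ i₂ = j₂ := by rw [hf₀]; simp [hne12.symm]
    set f₁ : S → S := Function.update f₀ i₁ j₁' with hf₁
    set f₂ : S → S := Function.update f₀ i₂ j₂' with hf₂
    set f₃ : S → S := Function.update f₁ i₂ j₂' with hf₃
    -- coordinate computations
    have v10 : f₁ i₁ = j₁' := by rw [hf₁]; simp
    have v12 : f₁ i₂ = j₂ := by rw [hf₁, Function.update_of_ne hne12.symm, hf₀2]
    have v21 : f₂ i₁ = j₁ := by rw [hf₂, Function.update_of_ne hne12, hf₀1]
    have v22 : f₂ i₂ = j₂' := by rw [hf₂]; simp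
    have v31 : f₃ i₁ = j₁' := by rw [hf₃, Function.update_of_ne hne12, v10]
    have v32 : f₃ i₂ = j₂' := by rw [hf₃]; simp
    have voth : ∀ i, i ≠ i₁ → i ≠ i₂ → f₁ i = f₀ i ∧ f₂ i = f₀ i ∧ f₃ i = f₀ i := by
      intro i h1 h2
      refine ⟨?_, ?_, ?_⟩
      · rw [hf₁, Function.update_of_ne h1]
      · rw [hf₂, Function.update_of_ne h2]
      · rw [hf₃, Function.update_of_ne h2, hf₁, Function.update_of_ne h1]
    -- distinctness
    have d01 : f₀ ≠ f₁ := fun h => hj₁'ne (by rw [← v10, ← h, hf₀1])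
    have d02 : f₀ ≠ f₂ := fun h => hj₂'ne (by rw [← v22, ← h, hf₀2])
    have d03 : f₀ ≠ f₃ := fun h => hj₁'ne (by rw [← v31, ← h, hf₀1])
    have d12 : f₁ ≠ f₂ := fun h => hj₁'ne (by rw [← v10, h, v21])
    have d13 : f₁ ≠ f₃ := fun h => hj₂'ne (by rw [← v32, ← h, v12])
    have d23 : f₂ ≠ f₃ := fun h => hj₁'ne (by rw [← v31, ← h, v21])
    -- positivity of μ on the four functions
    have hpos : ∀ f : S → S, (∀ i, 0 < P i (f i)) → 0 < μ f := by
      intro f hf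
      exact Finset.prod_pos fun i _ => hf i
    have hμ1pos : 0 < μ f₁ := by
      apply hpos
      intro i
      by_cases h1 : i = i₁
      · subst h1; rw [v10]; exact hj₁'pos
      · by_cases h2 : i = i₂
        · subst h2; rw [v12, ← hf₀2]; exact hf₀pos _
        · rw [(voth i h1 h2).1]; exact hf₀pos i
    have hμ2pos : 0 < μ f₂ := by
      apply hpos
      intro i
      by_cases h2 : i = i₂
      · subst h2; rw [v22]; exact hj₂'pos
      · by_cases h1 : i = i₁
        · subst h1; rw [v21, ← hf₀1]; exact hf₀pos _
        · rw [(voth i h1 h2).2.1]; exact hf₀pos i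
    set ε : ℝ := min (μ f₁) (μ f₂) with hε
    have hεpos : 0 < ε := lt_min hμ1pos hμ2pos
    set e : (S → S) → (S → S) → ℝ := fun g f => if f = g then 1 else 0 with he
    set c : (S → S) → ℝ := fun f => e f₀ f - e f₁ f - e f₂ f + e f₃ f with hc
    set ν : (S → S) → ℝ := fun f => μ f + ε * c f with hν
    have hsum_e : ∀ g' : S → S, (∑ f : S → S, e g' f) = 1 := by
      intro g'
      rw [he]
      simp
    have hme : ∀ (g' : S → S) (i : S) (j : S),
        (∑ f : S → S, if f i = j then e g' f else 0) = if g' i = j then 1 else 0 := by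
      intro g' i j
      rw [Fintype.sum_eq_single g']
      · simp [he]
      · intro f hf
        simp [he, hf]
    refine ⟨μ, ν, hμ, ⟨?_, ?_, ?_⟩, ?_⟩
    · -- nonnegativity of ν
      intro f
      rw [hν, hc]
      by_cases h0 : f = f₀
      · subst h0
        simp only [he, if_pos rfl, if_neg d01, if_neg d02, if_neg d03]
        have := hμ.1 f₀
        nlinarith
      · by_cases h1 : f = f₁
        · subst h1
          simp only [he, if_pos rfl, if_neg (Ne.symm d01), if_neg d12, if_neg d13]
          have h2 : ε ≤ μ f₁ := min_le_left _ _
          nlinarith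
        · by_cases h2 : f = f₂
          · subst h2
            simp only [he, if_pos rfl, if_neg (Ne.symm d02), if_neg (Ne.symm d12),
              if_neg d23]
            have h3 : ε ≤ μ f₂ := min_le_right _ _
            nlinarith
          · by_cases h3 : f = f₃
            · subst h3
              simp only [he, if_pos rfl, if_neg (Ne.symm d03), if_neg (Ne.symm d13),
                if_neg (Ne.symm d23)]
              have := hμ.1 f₃
              nlinarith
            · simp only [he, if_neg h0, if_neg h1, if_neg h2, if_neg h3]
              have := hμ.1 f
              nlinarith
    · -- total mass of ν
      have hcsum : ∑ f : S → S, c f = 0 := by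
        simp only [hc]
        rw [Finset.sum_add_distrib, Finset.sum_sub_distrib, Finset.sum_sub_distrib,
          hsum_e, hsum_e, hsum_e, hsum_e]
        ring
      calc ∑ f : S → S, ν f = (∑ f : S → S, μ f) + ε * ∑ f : S → S, c f := by
            rw [hν]
            rw [Finset.sum_add_distrib, ← Finset.mul_sum]
        _ = 1 := by rw [hμ.2.1, hcsum]; ring
    · -- marginals of ν
      intro i j
      have hsplit : ∀ f : S → S, (if f i = j then ν f else 0)
          = (if f i = j then μ f else 0) + ε * (if f i = j then c f else 0) := by
        intro f
        rw [hν]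
        split <;> ring
      have hcm : (∑ f : S → S, if f i = j then c f else 0) = 0 := by
        have hterm : ∀ f : S → S, (if f i = j then c f else 0)
            = (if f i = j then e f₀ f else 0) - (if f i = j then e f₁ f else 0)
              - (if f i = j then e f₂ f else 0) + (if f i = j then e f₃ f else 0) := by
          intro f
          rw [hc]
          split <;> ring
        rw [Finset.sum_congr rfl fun f _ => hterm f, Finset.sum_add_distrib,
          Finset.sum_sub_distrib, Finset.sum_sub_distrib, hme, hme, hme, hme]
        by_cases h1 : i = i₁
        · subst h1
          rw [hf₀1, v10, v21, v31]
          ring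
        · by_cases h2 : i = i₂
          · subst h2
            rw [hf₀2, v12, v22, v32]
            ring
          · obtain ⟨e1, e2, e3⟩ := voth i h1 h2
            rw [e1, e2, e3]
            ring
      calc (∑ f : S → S, if f i = j then ν f else 0)
          = (∑ f : S → S, if f i = j then μ f else 0)
            + ε * (∑ f : S → S, if f i = j then c f else 0) := by
            rw [Finset.sum_congr rfl fun f _ => hsplit f, Finset.sum_add_distrib,
              ← Finset.mul_sum]
        _ = P i j := by rw [hμ.2.2 i j, hcm]; ring
    · -- μ ≠ ν
      intro h
      have := congrFun h f₀
      rw [hν, hc] at this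
      simp only [he, if_pos rfl, if_neg d01, if_neg d02, if_neg d03] at this
      nlinarith
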